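/- arXiv:0906.2795 — 2 statements merged into one kernel-verified Lean document; each statement's English description precedes it below -/
import Mathlib

section
/- For any two subsets I, J ⊆ {1,...,n−1} whose associated compositions of n have the same multiset of parts, and for every partition λ of n, the number of permutations of {1,...,n} with cycle type λ and descent set contained in I equals the number of permutations with cycle type λ and descent set contained in J. -/
def descSeq {n : ℕ} (f : Fin n → ℕ) : Finset ℕ :=
  (Finset.range (n - 1)).filter
    (fun i => ∃ h : i + 1 < n, f ⟨i + 1, h⟩ < f ⟨i, Nat.lt_of_succ_lt h⟩)

def descSet {n : ℕ} (σ : Equiv.Perm (Fin n)) : Finset ℕ :=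
  descSeq (fun i => (σ i : ℕ))

def IsCyclic' {n : ℕ} (π : Equiv.Perm (Fin n)) : Prop :=
  ∀ x y : Fin n, ∃ k : ℕ, (π ^ k) x = y

def compParts (n : ℕ) (I : Finset ℕ) : Multiset ℕ :=
  ↑(List.zipWith (· - ·) ((I.sort (· ≤ ·)).map (· + 1) ++ [n])
      (0 :: (I.sort (· ≤ ·)).map (· + 1)))

def fullCycleType {n : ℕ} (π : Equiv.Perm (Fin n)) : Multiset ℕ :=
  π.cycleType + Multiset.replicate (n - π.support.card) 1

def InT0 (n : ℕ) (τ : Fin n → ℕ) : Prop :=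
  ∃ (π : Equiv.Perm (Fin n)) (k : Fin n), IsCyclic' π ∧
    τ = Function.update (fun i => ((π i : ℕ) + 1)) k 0

def InU (n : ℕ) (τ : Fin n → ℕ) : Prop :=
  ∃ (π : Equiv.Perm (Fin n)) (k : Fin n), IsCyclic' π ∧
    τ = Function.update (fun i => ((π i : ℕ) + 1)) k (n + 1)

def extPerm {n : ℕ} (π : Equiv.Perm (Fin n)) : Equiv.Perm (Fin (n + 1)) :=
  (finSuccEquivLast (n := n)).symm.permCongr π.optionCongr

def extCycle {n : ℕ} (π : Equiv.Perm (Fin n)) (k : Fin n) : Equiv.Perm (Fin (n + 1)) :=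
  extPerm π * Equiv.swap (Fin.castSucc k) (Fin.last n)

open Equiv Finset

/-- The infinite word read along the cycle of `x`. -/
def Wrd {n : ℕ} (σ : Equiv.Perm (Fin n)) (v : Fin n → ℕ) (x : Fin n) : ℕ → ℕ :=
  fun t => v ((σ ^ t) x)

/-- `w` is a monotone word which strictly increases at every descent of `σ`. -/
def InA {n : ℕ} (σ : Equiv.Perm (Fin n)) (w : Fin n → ℕ) : Prop :=
  Monotone w ∧ ∀ (i : ℕ) (h : i + 1 < n),
    σ ⟨i + 1, h⟩ < σ ⟨i, Nat.lt_of_succ_lt h⟩ → w ⟨i, Nat.lt_of_succ_lt h⟩ < w ⟨i + 1, h⟩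

namespace GR

variable {n : ℕ} {σ : Equiv.Perm (Fin n)} {w v : Fin n → ℕ}

lemma Wrd_zero (x : Fin n) : Wrd σ v x 0 = v x := by simp [Wrd]

lemma Wrd_shift (x : Fin n) (t : ℕ) : Wrd σ v (σ x) t = Wrd σ v x (t + 1) := by
  simp [Wrd, pow_succ, Equiv.Perm.mul_apply]

lemma step (hA : InA σ w) (i : ℕ) (h : i + 1 < n)
    (hw : w ⟨i, Nat.lt_of_succ_lt h⟩ = w ⟨i + 1, h⟩) :
    σ ⟨i, Nat.lt_of_succ_lt h⟩ < σ ⟨i + 1, h⟩ := by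
  rcases lt_trichotomy (σ ⟨i, Nat.lt_of_succ_lt h⟩) (σ ⟨i + 1, h⟩) with h1 | h1 | h1
  · exact h1
  · exact absurd (σ.injective h1) (by simp [Fin.ext_iff])
  · exact absurd hw (ne_of_lt (hA.2 i h h1))

lemma run (hA : InA σ w) : ∀ (d : ℕ) (x y : Fin n), y.val = x.val + d + 1 →
    w x = w y → σ x < σ y := by
  intro d
  induction d with
  | zero =>
    intro x y hy hw
    have h : x.val + 1 < n := hy ▸ y.isLt
    have hx : x = ⟨x.val, Nat.lt_of_succ_lt h⟩ := by simp
    have hy' : y = ⟨x.val + 1, h⟩ := by simp [Fin.ext_iff, hy]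
    rw [hx, hy'] at hw ⊢
    exact step hA x.val h hw
  | succ d ih =>
    intro x y hy hw
    have hzlt : x.val + d + 1 < n := lt_trans (by omega) y.isLt
    set z : Fin n := ⟨x.val + d + 1, hzlt⟩ with hz
    have hxz : x ≤ z := by simp [hz, Fin.le_def]; omega
    have hzy : z ≤ y := by simp [hz, Fin.le_def]; omega
    have m1 : w x ≤ w z := hA.1 hxz
    have m2 : w z ≤ w y := hA.1 hzy
    have h1 : w x = w z := by omega
    have h2 : w z = w y := by omega
    have s1 : σ x < σ z := ih x z (by simp [hz]) h1
    have hzv : (z : ℕ) = x.val + d + 1 := rfl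
    have hyn := y.isLt
    have h3 : z.val + 1 < n := by omega
    have s2 : σ z < σ y := by
      have hz2 : z = ⟨z.val, Nat.lt_of_succ_lt h3⟩ := by simp
      have hy2 : y = ⟨z.val + 1, h3⟩ := by simp [Fin.ext_iff, hy, hz]; omega
      rw [hz2, hy2] at h2 ⊢
      exact step hA z.val h3 h2
    exact lt_trans s1 s2

lemma run_lt (hA : InA σ w) {x y : Fin n} (hxy : x < y) (hw : w x = w y) : σ x < σ y := by
  have : y.val = x.val + (y.val - x.val - 1) + 1 := by
    have := (Fin.lt_iff_val_lt_val.mp hxy); omega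
  exact run hA _ x y this hw

lemma run_le (hA : InA σ w) {x y : Fin n} (hxy : x ≤ y) (hw : w x = w y) : σ x ≤ σ y := by
  rcases eq_or_lt_of_le hxy with rfl | h
  · exact le_refl _
  · exact le_of_lt (run_lt hA h hw)

/- ### Lex lemmas -/

lemma lex_lt_iff {f g : ℕ → ℕ} :
    toLex f < toLex g ↔ ∃ t, (∀ s, s < t → f s = g s) ∧ f t < g t := Iff.rfl

lemma lex_lt_shift {f g : ℕ → ℕ} (h : toLex f < toLex g) (h0 : f 0 = g 0) :
    toLex (fun t => f (t + 1)) < toLex (fun t => g (t + 1)) := by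
  obtain ⟨t, hb, hl⟩ := lex_lt_iff.mp h
  cases t with
  | zero => exact absurd h0 (ne_of_lt hl)
  | succ m => exact lex_lt_iff.mpr ⟨m, fun s hs => hb (s+1) (by omega), hl⟩

lemma lex_le_head {f g : ℕ → ℕ} (h : toLex f ≤ toLex g) : f 0 ≤ g 0 := by
  rcases eq_or_lt_of_le h with he | hl
  · exact le_of_eq (congrFun (toLex_inj.mp he) 0)
  · obtain ⟨t, hb, hl⟩ := lex_lt_iff.mp hl
    cases t with
    | zero => exact le_of_lt hl
    | succ m => exact le_of_eq (hb 0 (by omega))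

/- ### The position order refines the lex order on words -/

lemma wordLe_aux (hA : InA σ w) :
    ∀ (t : ℕ) (x y : Fin n), x ≤ y → (∀ s, s < t → Wrd σ w x s = Wrd σ w y s) →
      Wrd σ w x t ≤ Wrd σ w y t := by
  intro t
  induction t with
  | zero => intro x y hxy _; simpa [Wrd_zero] using hA.1 hxy
  | succ t ih =>
    intro x y hxy hb
    have h0 : w x = w y := by simpa [Wrd_zero] using hb 0 (Nat.succ_pos t)
    have hσ : σ x ≤ σ y := run_le hA hxy h0
    have := ih (σ x) (σ y) hσ (fun s hs => by
      rw [Wrd_shift, Wrd_shift]; exact hb (s+1) (by omega))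
    rwa [Wrd_shift, Wrd_shift] at this

lemma wordLe (hA : InA σ w) {x y : Fin n} (hxy : x ≤ y) :
    toLex (Wrd σ w x) ≤ toLex (Wrd σ w y) := by
  by_contra hcon
  obtain ⟨t, hb, hl⟩ := lex_lt_iff.mp (lt_of_not_ge hcon)
  exact absurd (wordLe_aux hA t x y hxy (fun s hs => (hb s hs).symm)) (not_le_of_gt hl)

/- ### Primitivity -/

lemma runW (hA : InA σ w) {x y : Fin n} (hxy : x < y) (hW : Wrd σ w x = Wrd σ w y) :
    ∀ s : ℕ, (σ ^ s) x < (σ ^ s) y ∧ Wrd σ w ((σ ^ s) x) = Wrd σ w ((σ ^ s) y) := by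
  intro s
  induction s with
  | zero => simpa using ⟨hxy, hW⟩
  | succ s ih =>
    have h0 : w ((σ ^ s) x) = w ((σ ^ s) y) := by
      simpa [Wrd_zero] using congrFun ih.2 0
    have hlt : σ ((σ ^ s) x) < σ ((σ ^ s) y) := run_lt hA ih.1 h0
    have hps : ∀ z : Fin n, (σ ^ (s + 1)) z = σ ((σ ^ s) z) := by
      intro z; rw [pow_succ']; rfl
    refine ⟨by rw [hps, hps]; exact hlt, ?_⟩
    funext t
    rw [hps, hps, Wrd_shift, Wrd_shift, congrFun ih.2 (t+1)]

lemma prim_of_InA (hA : InA σ w) :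
    ∀ x y : Fin n, σ.SameCycle x y → Wrd σ w x = Wrd σ w y → x = y := by
  have main : ∀ x y : Fin n, x < y → Wrd σ w x = Wrd σ w y →
      ¬ σ.SameCycle x y := by
    intro x y hxy hW hsc
    -- get t with (σ ^ t) x = y
    obtain ⟨t, ht0, -, htx⟩ := Equiv.Perm.SameCycle.exists_pow_eq σ hsc
    have key : ∀ m : ℕ, (σ ^ (m * t)) x < (σ ^ ((m+1) * t)) x := by
      intro m
      have h1 : (σ ^ ((m+1) * t)) x = (σ ^ (m * t)) y := by
        rw [← htx, ← Equiv.Perm.mul_apply, ← pow_add]; congr 1; ring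
      rw [h1]
      exact (runW hA hxy hW (m * t)).1
    have hmono : StrictMono (fun m : ℕ => (((σ ^ (m * t)) x : Fin n) : ℕ)) := by
      apply strictMono_nat_of_lt_succ
      intro m
      exact_mod_cast key m
    have := hmono.le_apply (x := n)
    have hb : (((σ ^ (n * t)) x : Fin n) : ℕ) < n := Fin.isLt _
    omega
  intro x y hsc hW
  rcases lt_trichotomy x y with h | h | h
  · exact absurd hsc (main x y h hW)
  · exact h
  · exact absurd hsc.symm (main y x h hW.symm)

/- ### Periods -/

lemma Wrd_period (x : Fin n) (t : ℕ) : Wrd σ v x (t + orderOf σ) = Wrd σ v x t := by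
  simp [Wrd, pow_add, Equiv.Perm.mul_apply, pow_orderOf_eq_one]

lemma per_mul {f : ℕ → ℕ} {p : ℕ} (hp : ∀ t, f (t + p) = f t) :
    ∀ (k t : ℕ), f (t + p * k) = f t := by
  intro k
  induction k with
  | zero => simp
  | succ k ih => intro t; rw [Nat.mul_succ, ← Nat.add_assoc, hp, ih]

lemma per_gcd {f : ℕ → ℕ} :
    ∀ p q : ℕ, (∀ t, f (t + p) = f t) → (∀ t, f (t + q) = f t) →
      ∀ t, f (t + Nat.gcd p q) = f t := by
  intro p q
  induction p, q using Nat.gcd.induction with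
  | H0 q => intro _ hq; simpa using hq
  | H1 p q hp ih =>
    intro hpp hqq
    rw [Nat.gcd_rec]
    apply ih
    · intro t
      have : t + q % p + p * (q / p) = t + q := by
        have := Nat.mod_add_div q p; omega
      rw [← hqq t, ← this, per_mul hpp]
    · exact hpp

lemma preext {f g : ℕ → ℕ} {p q : ℕ} (hp : 0 < p) (hq : 0 < q)
    (hfp : ∀ t, f (t + p) = f t) (hgq : ∀ t, g (t + q) = g t)
    (hshift : ∀ t, f (t + 1) = g (t + 1)) : f = g := by
  set s : ℕ → ℕ := fun t => f (t + 1) with hs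
  have hsp : ∀ t, s (t + p) = s t := by
    intro t; simp only [hs]
    have : t + p + 1 = t + 1 + p := by ring
    rw [this, hfp]
  have hsq : ∀ t, s (t + q) = s t := by
    intro t; simp only [hs, hshift]
    have : t + q + 1 = t + 1 + q := by ring
    rw [this, hgq]
  set d := Nat.gcd p q with hd
  have hdpos : 0 < d := Nat.gcd_pos_of_pos_left q hp
  have hsd : ∀ t, s (t + d) = s t := per_gcd p q hsp hsq
  have keyd : ∀ m : ℕ, 0 < m → d ∣ m → s (m - 1) = s (d - 1) := by
    intro m hm hdm
    have h1 : m - 1 = (d - 1) + d * ((m - d) / d) := by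
      have h2 : d ∣ m - d := (Nat.dvd_sub hdm dvd_rfl)
      have h3 : d * ((m - d) / d) = m - d := Nat.mul_div_cancel' h2
      have h4 : d ≤ m := Nat.le_of_dvd hm hdm
      omega
    rw [h1, per_mul hsd]
  have hf0 : f 0 = s (p - 1) := by
    have : f 0 = f (0 + p) := (hfp 0).symm
    rw [this]
    simp only [hs]
    congr 1; omega
  have hg0 : g 0 = s (q - 1) := by
    have h4 : g 0 = g (0 + q) := (hgq 0).symm
    have h5 : 0 + q = (q - 1) + 1 := by omega
    rw [h4, h5, ← hshift]
  have h00 : f 0 = g 0 := by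
    rw [hf0, hg0, keyd p hp (Nat.gcd_dvd_left p q), keyd q hq (Nat.gcd_dvd_right p q)]
  funext t
  cases t with
  | zero => exact h00
  | succ m => exact hshift m

/- ### Sorted uniqueness lemmas -/

lemma perm_univ_map (g : Equiv.Perm (Fin n)) :
    Multiset.map (⇑g) Finset.univ.val = Finset.univ.val := by
  have h := congrArg Finset.val (Finset.map_univ_equiv g)
  rw [Finset.map_val] at h
  exact h

lemma ofFn_coe_multiset {β : Type*} (F : Fin n → β) :
    ((List.ofFn F : List β) : Multiset β) = Multiset.map F Finset.univ.val := by
  rw [List.ofFn_eq_map]; rfl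

lemma mono_eq_of_perm_list {β : Type*} [LinearOrder β] {F F' : Fin n → β}
    (hF : Monotone F) (hF' : Monotone F')
    (hperm : ((List.ofFn F : List β) : Multiset β) = ((List.ofFn F' : List β) : Multiset β)) : F = F' := by
  have hp : List.Perm (List.ofFn F) (List.ofFn F') := Multiset.coe_eq_coe.mp hperm
  have := List.Perm.eq_of_sortedLE
    (List.sortedLE_ofFn_iff.mpr hF) (List.sortedLE_ofFn_iff.mpr hF') hp
  exact List.ofFn_injective this

lemma mono_eq_of_comp_perm {β : Type*} [LinearOrder β] {F F' : Fin n → β}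
    (hF : Monotone F) (hF' : Monotone F') (g : Equiv.Perm (Fin n))
    (h : ∀ x, F' (g x) = F x) : F = F' := by
  apply mono_eq_of_perm_list hF hF'
  rw [ofFn_coe_multiset, ofFn_coe_multiset]
  have : F = F' ∘ ⇑g := by funext x; exact (h x).symm
  rw [this, ← Multiset.map_map, perm_univ_map]

lemma mono_eq_of_map_eq {F F' : Fin n → ℕ}
    (hF : Monotone F) (hF' : Monotone F')
    (h : Multiset.map F Finset.univ.val = Multiset.map F' Finset.univ.val) : F = F' := by
  apply mono_eq_of_perm_list hF hF'
  rw [ofFn_coe_multiset, ofFn_coe_multiset, h]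

/- ### unique strictly monotone bijection between finsets -/

lemma card_lowerset {α : Type*} [LinearOrder α] [DecidableEq α]
    {S T : Finset α} {f : α → α}
    (hf1 : ∀ a ∈ S, ∀ b ∈ S, a < b → f a < f b)
    (hf2 : ∀ a ∈ S, f a ∈ T)
    (hf3 : ∀ t ∈ T, ∃ a ∈ S, f a = t)
    {a : α} (ha : a ∈ S) :
    (T.filter (· ≤ f a)).card = (S.filter (· ≤ a)).card := by
  symm
  apply Finset.card_bij (fun b _ => f b)
  · intro b hb
    simp only [Finset.mem_filter] at hb ⊢
    refine ⟨hf2 b hb.1, ?_⟩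
    rcases eq_or_lt_of_le hb.2 with rfl | hlt
    · exact le_refl _
    · exact le_of_lt (hf1 b hb.1 a ha hlt)
  · intro b1 hb1 b2 hb2 hfeq
    simp only [Finset.mem_filter] at hb1 hb2
    rcases lt_trichotomy b1 b2 with h | h | h
    · exact absurd hfeq (ne_of_lt (hf1 b1 hb1.1 b2 hb2.1 h))
    · exact h
    · exact absurd hfeq.symm (ne_of_lt (hf1 b2 hb2.1 b1 hb1.1 h))
  · intro t ht
    simp only [Finset.mem_filter] at ht
    obtain ⟨b, hb, rfl⟩ := hf3 t ht.1
    refine ⟨b, Finset.mem_filter.mpr ⟨hb, ?_⟩, rfl⟩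
    by_contra hcon
    push_neg at hcon
    exact absurd ht.2 (not_le_of_gt (hf1 a ha b hb hcon))

lemma strictMonoOn_bij_unique {α : Type*} [LinearOrder α] [DecidableEq α]
    {S T : Finset α} {f g : α → α}
    (hf1 : ∀ a ∈ S, ∀ b ∈ S, a < b → f a < f b)
    (hf2 : ∀ a ∈ S, f a ∈ T)
    (hf3 : ∀ t ∈ T, ∃ a ∈ S, f a = t)
    (hg1 : ∀ a ∈ S, ∀ b ∈ S, a < b → g a < g b)
    (hg2 : ∀ a ∈ S, g a ∈ T)
    (hg3 : ∀ t ∈ T, ∃ a ∈ S, g a = t) :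
    ∀ a ∈ S, f a = g a := by
  have main : ∀ (f g : α → α),
      (∀ a ∈ S, ∀ b ∈ S, a < b → f a < f b) → (∀ a ∈ S, f a ∈ T) →
      (∀ t ∈ T, ∃ a ∈ S, f a = t) →
      (∀ a ∈ S, ∀ b ∈ S, a < b → g a < g b) → (∀ a ∈ S, g a ∈ T) →
      (∀ t ∈ T, ∃ a ∈ S, g a = t) →
      ∀ a ∈ S, ¬ (f a < g a) := by
    intro f g hf1 hf2 hf3 hg1 hg2 hg3 a ha hlt
    have h1 := card_lowerset hf1 hf2 hf3 ha
    have h2 := card_lowerset hg1 hg2 hg3 ha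
    have hsub : T.filter (· ≤ f a) ⊂ T.filter (· ≤ g a) := by
      refine Finset.ssubset_iff_of_subset ?_ |>.mpr ?_
      · intro t ht
        simp only [Finset.mem_filter] at ht ⊢
        exact ⟨ht.1, le_trans ht.2 (le_of_lt hlt)⟩
      · refine ⟨g a, Finset.mem_filter.mpr ⟨hg2 a ha, le_refl _⟩, ?_⟩
        simp only [Finset.mem_filter]
        rintro ⟨-, hle⟩
        exact absurd hle (not_le_of_gt hlt)
    have := Finset.card_lt_card hsub
    omega
  intro a ha
  rcases lt_trichotomy (f a) (g a) with h | h | h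
  · exact absurd h (main f g hf1 hf2 hf3 hg1 hg2 hg3 a ha)
  · exact h
  · exact absurd h (main g f hg1 hg2 hg3 hf1 hf2 hf3 a ha)

/- ### Uniqueness of the canonical representative -/

lemma conj_pow_apply (g σ : Equiv.Perm (Fin n)) (t : ℕ) (x : Fin n) :
    ((g * σ * g⁻¹) ^ t) (g x) = g ((σ ^ t) x) := by
  induction t generalizing x with
  | zero => simp
  | succ t ih =>
    have h1 : ((g * σ * g⁻¹) ^ (t + 1)) (g x) = ((g * σ * g⁻¹) ^ t) ((g * σ * g⁻¹) (g x)) := by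
      rw [pow_succ, Equiv.Perm.mul_apply]
    have h2 : (g * σ * g⁻¹) (g x) = g (σ x) := by
      simp [Equiv.Perm.mul_apply]
    have h3 : (σ ^ (t + 1)) x = (σ ^ t) (σ x) := by
      rw [pow_succ, Equiv.Perm.mul_apply]
    rw [h1, h2, h3, ih (σ x)]

lemma Wrd_conj {σ' : Equiv.Perm (Fin n)} {w' : Fin n → ℕ} (g : Equiv.Perm (Fin n))
    (hconj : σ' = g * σ * g⁻¹) (hw : w = w' ∘ g) (x : Fin n) :
    Wrd σ' w' (g x) = Wrd σ w x := by
  funext t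
  simp only [Wrd, hconj, hw, Function.comp_apply, conj_pow_apply]

theorem uniqueRep {σ' : Equiv.Perm (Fin n)} {w' : Fin n → ℕ}
    (hA : InA σ w) (hA' : InA σ' w') (g : Equiv.Perm (Fin n))
    (hconj : σ' = g * σ * g⁻¹) (hw : w = w' ∘ g) : σ = σ' ∧ w = w' := by
  classical
  have hWc : ∀ x, Wrd σ' w' (g x) = Wrd σ w x := Wrd_conj g hconj hw
  -- the lex word functions agree
  have hF : (fun x => toLex (Wrd σ w x)) = (fun x => toLex (Wrd σ' w' x)) := by
    apply mono_eq_of_comp_perm (fun x y hxy => wordLe hA hxy)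
      (fun x y hxy => wordLe hA' hxy) g
    intro x
    exact congrArg toLex (hWc x)
  have hW : ∀ x, Wrd σ w x = Wrd σ' w' x := by
    intro x
    exact toLex_inj.mp (congrFun hF x)
  have hww' : w = w' := by
    funext x
    have := congrFun (hW x) 0
    simpa [Wrd_zero] using this
  refine ⟨?_, hww'⟩
  ext x
  set W : Fin n → ℕ → ℕ := fun z => Wrd σ w z with hWdef
  have hWshift : ∀ z, W (σ z) = fun t => W z (t + 1) := by
    intro z; funext t; exact Wrd_shift z t
  have hWshift' : ∀ z, W (σ' z) = fun t => W z (t + 1) := by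
    intro z; funext t
    have h1 : W (σ' z) t = Wrd σ' w' (σ' z) t := by rw [hWdef]; exact congrFun (hW _) t
    rw [h1, Wrd_shift]
    exact (congrFun (hW z) (t+1)).symm
  set S : Finset (Fin n) := Finset.univ.filter (fun z => W z = W x) with hS
  set T : Finset (Fin n) := Finset.univ.filter (fun z => W z = fun t => W x (t + 1)) with hT
  have hmemS : ∀ z, z ∈ S ↔ W z = W x := by intro z; simp [hS]
  have hmemT : ∀ z, z ∈ T ↔ W z = fun t => W x (t + 1) := by intro z; simp [hT]
  have hperiod : ∀ z : Fin n, ∀ t, W z (t + orderOf σ) = W z t := fun z t => Wrd_period z t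
  have horder : 0 < orderOf σ := orderOf_pos σ
  have horder' : 0 < orderOf σ' := orderOf_pos σ'
  have hperiod' : ∀ z : Fin n, ∀ t, W z (t + orderOf σ') = W z t := by
    intro z t
    show Wrd σ w z (t + orderOf σ') = Wrd σ w z t
    rw [hW z]
    exact Wrd_period z t
  -- f := σ hypotheses
  have hf1 : ∀ a ∈ S, ∀ b ∈ S, a < b → σ a < σ b := by
    intro a ha b hb hab
    have hwab : w a = w b := by
      have h1 := congrFun ((hmemS a).mp ha) 0
      have h2 := congrFun ((hmemS b).mp hb) 0
      simp only [hWdef, Wrd_zero] at h1 h2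
      rw [h1, h2]
    exact run_lt hA hab hwab
  have hf2 : ∀ a ∈ S, σ a ∈ T := by
    intro a ha
    rw [hmemT, hWshift, (hmemS a).mp ha]
  have hf3 : ∀ t' ∈ T, ∃ a ∈ S, σ a = t' := by
    intro t' ht'
    refine ⟨σ⁻¹ t', ?_, by simp⟩
    rw [hmemS]
    have hsh : ∀ s, W (σ⁻¹ t') (s + 1) = W x (s + 1) := by
      intro s
      have h1 : W (σ (σ⁻¹ t')) s = W (σ⁻¹ t') (s + 1) := congrFun (hWshift _) s
      rw [← h1]
      simp only [Equiv.Perm.inv_def, Equiv.apply_symm_apply]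
      exact congrFun ((hmemT t').mp ht') s
    exact preext horder horder (hperiod _) (hperiod x) hsh
  have hg1 : ∀ a ∈ S, ∀ b ∈ S, a < b → σ' a < σ' b := by
    intro a ha b hb hab
    have hwab : w' a = w' b := by
      have h1 := congrFun ((hmemS a).mp ha) 0
      have h2 := congrFun ((hmemS b).mp hb) 0
      simp only [hWdef, Wrd_zero] at h1 h2
      rw [← hww'] at *
      rw [h1, h2]
    exact run_lt hA' hab hwab
  have hg2 : ∀ a ∈ S, σ' a ∈ T := by
    intro a ha
    rw [hmemT, hWshift', (hmemS a).mp ha]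
  have hg3 : ∀ t' ∈ T, ∃ a ∈ S, σ' a = t' := by
    intro t' ht'
    refine ⟨σ'⁻¹ t', ?_, by simp⟩
    rw [hmemS]
    have hsh : ∀ s, W (σ'⁻¹ t') (s + 1) = W x (s + 1) := by
      intro s
      have h1 : W (σ' (σ'⁻¹ t')) s = W (σ'⁻¹ t') (s + 1) := congrFun (hWshift' _) s
      rw [← h1]
      simp only [Equiv.Perm.inv_def, Equiv.apply_symm_apply]
      exact congrFun ((hmemT t').mp ht') s
    exact preext horder' horder (hperiod' _) (hperiod x) hsh
  have hx : x ∈ S := (hmemS x).mpr rfl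
  exact congrArg Fin.val (strictMonoOn_bij_unique hf1 hf2 hf3 hg1 hg2 hg3 x hx)

/- ### Existence of the canonical representative -/

theorem existsRep (σ : Equiv.Perm (Fin n)) (v : Fin n → ℕ)
    (hprim : ∀ x y : Fin n, σ.SameCycle x y → Wrd σ v x = Wrd σ v y → x = y) :
    ∃ q : (Equiv.Perm (Fin n) × (Fin n → ℕ)) × Equiv.Perm (Fin n),
      InA q.1.1 q.1.2 ∧ q.1.1 = q.2 * σ * q.2⁻¹ ∧ v = q.1.2 ∘ q.2 := by
  classical
  -- minimum of the cycle of x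
  have hne : ∀ x : Fin n, (Finset.univ.filter (fun z => σ.SameCycle x z)).Nonempty :=
    fun x => ⟨x, by simp [Equiv.Perm.SameCycle.refl]⟩
  set minC : Fin n → Fin n :=
    fun x => (Finset.univ.filter (fun z => σ.SameCycle x z)).min' (hne x) with hminC
  have minC_eq : ∀ x y : Fin n, σ.SameCycle x y → minC x = minC y := by
    intro x y hsc
    have : (Finset.univ.filter (fun z => σ.SameCycle x z)) =
        (Finset.univ.filter (fun z => σ.SameCycle y z)) := by
      apply Finset.filter_congr
      intro z _
      exact ⟨fun h => hsc.symm.trans h, fun h => hsc.trans h⟩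
    simp only [hminC]
    congr 1
  have minC_mem : ∀ x : Fin n, σ.SameCycle x (minC x) := by
    intro x
    have := Finset.min'_mem _ (hne x)
    simpa using this
  have minC_inj : ∀ x y : Fin n, minC x = minC y → σ.SameCycle x y := by
    intro x y h
    exact (minC_mem x).trans (h ▸ (minC_mem y)).symm
  have sc_apply : ∀ x : Fin n, σ.SameCycle x (σ x) := by
    intro x; exact ⟨1, by simp⟩
  -- the sorting key
  set K : Fin n → Lex (ℕ → ℕ) ×ₗ Fin n :=
    fun x => toLex (toLex (Wrd σ v x), minC x) with hK
  have Kinj : Function.Injective K := by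
    intro x y hxy
    have h1 : toLex (Wrd σ v x) = toLex (Wrd σ v y) ∧ minC x = minC y := by
      have := congrArg ofLex hxy
      exact ⟨congrArg Prod.fst this, congrArg Prod.snd this⟩
    exact hprim x y (minC_inj x y h1.2) (toLex_inj.mp h1.1)
  -- tie-breaking equivariance
  have Ktie : ∀ x y : Fin n, Wrd σ v x = Wrd σ v y → K x < K y → K (σ x) < K (σ y) := by
    intro x y hW hlt
    have hWs : Wrd σ v (σ x) = Wrd σ v (σ y) := by
      funext t; rw [Wrd_shift, Wrd_shift, hW]
    have hm : minC x < minC y := by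
      rcases Prod.Lex.lt_iff.mp hlt with h | h
      · exact absurd (congrArg toLex hW) (ne_of_lt h)
      · exact h.2
    apply Prod.Lex.lt_iff.mpr
    right
    constructor
    · exact congrArg toLex hWs
    · show minC (σ x) < minC (σ y)
      rw [← minC_eq x (σ x) (sc_apply x), ← minC_eq y (σ y) (sc_apply y)]
      exact hm
  have Kshift : ∀ x y : Fin n, v x = v y → toLex (Wrd σ v x) < toLex (Wrd σ v y) →
      K (σ x) < K (σ y) := by
    intro x y hv hlt
    apply Prod.Lex.lt_iff.mpr
    left
    have h0 : Wrd σ v x 0 = Wrd σ v y 0 := by simpa [Wrd_zero] using hv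
    have := lex_lt_shift hlt h0
    have hx : (fun t => Wrd σ v x (t + 1)) = Wrd σ v (σ x) := by
      funext t; rw [Wrd_shift]
    have hy : (fun t => Wrd σ v y (t + 1)) = Wrd σ v (σ y) := by
      funext t; rw [Wrd_shift]
    rwa [hx, hy] at this
  -- sort
  set r : Equiv.Perm (Fin n) := Tuple.sort K with hr
  have hKr : Monotone (K ∘ ⇑r) := Tuple.monotone_sort K
  have hKrs : ∀ i j : Fin n, i < j → K (r i) < K (r j) := by
    intro i j hij
    rcases lt_or_eq_of_le (hKr (le_of_lt hij)) with h | h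
    · exact h
    · exact absurd (r.injective (Kinj h)) (ne_of_lt hij)
  set g : Equiv.Perm (Fin n) := r⁻¹ with hg
  set w' : Fin n → ℕ := fun i => v (r i) with hw'
  set σ' : Equiv.Perm (Fin n) := g * σ * g⁻¹ with hσ'
  refine ⟨((σ', w'), g), ⟨?_, ?_⟩, rfl, ?_⟩
  · -- Monotone w'
    intro i j hij
    rcases eq_or_lt_of_le hij with rfl | hij
    · exact le_refl _
    have hK := hKrs i j hij
    have h1 : toLex (Wrd σ v (r i)) ≤ toLex (Wrd σ v (r j)) := by
      rcases Prod.Lex.lt_iff.mp hK with h | h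
      · exact le_of_lt h
      · exact le_of_eq h.1
    have := lex_le_head h1
    simpa [hw', Wrd_zero] using this
  · -- strict at descents
    intro i h hdesc
    set x : Fin n := r ⟨i, Nat.lt_of_succ_lt h⟩ with hx
    set y : Fin n := r ⟨i + 1, h⟩ with hy
    have hKxy : K x < K y := hKrs _ _ (by simp [Fin.lt_def])
    -- descent hypothesis in terms of g, σ
    have hσ'i : σ' ⟨i, Nat.lt_of_succ_lt h⟩ = g (σ x) := by
      simp [hσ', hx, Equiv.Perm.mul_apply, hg]
    have hσ'i1 : σ' ⟨i + 1, h⟩ = g (σ y) := by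
      simp [hσ', hy, Equiv.Perm.mul_apply, hg]
    rw [hσ'i, hσ'i1] at hdesc
    -- hdesc : g (σ y) < g (σ x)
    have hKs : K (σ y) < K (σ x) := by
      have h1 : σ y = r (g (σ y)) := by simp [hg]
      have h2 : σ x = r (g (σ x)) := by simp [hg]
      rw [h1, h2]
      exact hKrs _ _ hdesc
    -- now show v x < v y
    show w' ⟨i, Nat.lt_of_succ_lt h⟩ < w' ⟨i + 1, h⟩
    simp only [hw', ← hx, ← hy]
    by_contra hcon
    push_neg at hcon
    -- v y ≤ v x; but monotone gives v x ≤ v y hence equal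
    have hvxy : v x ≤ v y := by
      have h1 : toLex (Wrd σ v x) ≤ toLex (Wrd σ v y) := by
        rcases Prod.Lex.lt_iff.mp hKxy with h' | h'
        · exact le_of_lt h'
        · exact le_of_eq h'.1
      have := lex_le_head h1
      simpa [Wrd_zero] using this
    have hveq : v x = v y := le_antisymm hvxy hcon
    -- case analysis on K x < K y
    rcases Prod.Lex.lt_iff.mp hKxy with h' | h'
    · -- strict lex: shift stays strict
      exact absurd (Kshift x y hveq h') (not_lt_of_gt hKs)
    · -- tie: equivariant
      have := Ktie x y (toLex_inj.mp h'.1) hKxy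
      exact absurd this (not_lt_of_gt hKs)
  · funext z
    simp [hw', hg]

/- ### fullCycleType is conjugation invariant -/

lemma fullCycleType_conj (g τ : Equiv.Perm (Fin n)) :
    fullCycleType (g * τ * g⁻¹) = fullCycleType τ := by
  unfold fullCycleType
  have h1 : (g * τ * g⁻¹).cycleType = τ.cycleType := Equiv.Perm.cycleType_conj
  have h2 : (g * τ * g⁻¹).support.card = τ.support.card := by
    rw [← Equiv.Perm.sum_cycleType, ← Equiv.Perm.sum_cycleType, h1]
  rw [h1, h2]

/- ### transport of primitivity along injective relabelings -/

lemma prim_comp {ρf : ℕ → ℕ} (hinj : Function.Injective ρf)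
    (h : ∀ x y : Fin n, σ.SameCycle x y → Wrd σ v x = Wrd σ v y → x = y) :
    ∀ x y : Fin n, σ.SameCycle x y → Wrd σ (ρf ∘ v) x = Wrd σ (ρf ∘ v) y → x = y := by
  intro x y hsc hW
  apply h x y hsc
  funext t
  exact hinj (congrFun hW t)

lemma Wrd_comp (ρf : ℕ → ℕ) (x : Fin n) : Wrd σ (ρf ∘ v) x = ρf ∘ (Wrd σ v x) := rfl

/- ### The pair counting sets -/

def GoodPair (n : ℕ) (lam : Multiset ℕ) (M : Multiset ℕ)
    (p : Equiv.Perm (Fin n) × (Fin n → ℕ)) : Prop :=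
  fullCycleType p.1 = lam ∧ InA p.1 p.2 ∧ Multiset.map p.2 Finset.univ.val = M

theorem card_goodPair_map (lam M : Multiset ℕ) (ρ : ℕ ≃ ℕ) :
    Nat.card {p : Equiv.Perm (Fin n) × (Fin n → ℕ) // GoodPair n lam M p} =
      Nat.card {p : Equiv.Perm (Fin n) × (Fin n → ℕ) // GoodPair n lam (M.map ρ) p} := by
  classical
  -- the canonical representative of (σ, ρ ∘ w)
  have canonSpec : ∀ (τ : Equiv.Perm (Fin n)) (u : Fin n → ℕ), InA τ u →
      ∃ q : (Equiv.Perm (Fin n) × (Fin n → ℕ)) × Equiv.Perm (Fin n),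
        InA q.1.1 q.1.2 ∧ q.1.1 = q.2 * τ * q.2⁻¹ ∧ (⇑ρ ∘ u) = q.1.2 ∘ q.2 := by
    intro τ u hu
    exact existsRep τ (⇑ρ ∘ u) (prim_comp ρ.injective (prim_of_InA hu))
  set F : {p : Equiv.Perm (Fin n) × (Fin n → ℕ) // GoodPair n lam M p} →
      {p : Equiv.Perm (Fin n) × (Fin n → ℕ) // GoodPair n lam (M.map ρ) p} :=
    fun ⟨p, hp⟩ => by
      refine ⟨(Classical.choose (canonSpec p.1 p.2 hp.2.1)).1, ?_, ?_, ?_⟩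
      · obtain ⟨h1, h2, h3⟩ := Classical.choose_spec (canonSpec p.1 p.2 hp.2.1)
        rw [h2, fullCycleType_conj]
        exact hp.1
      · exact (Classical.choose_spec (canonSpec p.1 p.2 hp.2.1)).1
      · obtain ⟨h1, h2, h3⟩ := Classical.choose_spec (canonSpec p.1 p.2 hp.2.1)
        set q := Classical.choose (canonSpec p.1 p.2 hp.2.1)
        have : Multiset.map q.1.2 Finset.univ.val
            = Multiset.map (q.1.2 ∘ ⇑q.2) Finset.univ.val := by
          conv_lhs => rw [← perm_univ_map q.2]
          rw [Multiset.map_map]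
        rw [this, ← h3]
        have : Multiset.map (⇑ρ ∘ p.2) Finset.univ.val
            = Multiset.map ⇑ρ (Multiset.map p.2 Finset.univ.val) := by
          rw [Multiset.map_map]
        rw [this, hp.2.2]
    with hF
  have hFinj : Function.Injective F := by
    rintro ⟨p1, hp1⟩ ⟨p2, hp2⟩ heq
    obtain ⟨ha1, hb1, hc1⟩ := Classical.choose_spec (canonSpec p1.1 p1.2 hp1.2.1)
    obtain ⟨ha2, hb2, hc2⟩ := Classical.choose_spec (canonSpec p2.1 p2.2 hp2.2.1)
    set q1 := Classical.choose (canonSpec p1.1 p1.2 hp1.2.1)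
    set q2 := Classical.choose (canonSpec p2.1 p2.2 hp2.2.1)
    have hq : q1.1 = q2.1 := congrArg Subtype.val heq
    -- p2 is conjugate to p1 via g2⁻¹ * g1... derive p1 = p2 via uniqueRep
    -- q1.1.1 = q1.2 * p1.1 * q1.2⁻¹ and same word data
    -- hence p1.1 = (q1.2⁻¹ * q2.2) * p2.1 * (q1.2⁻¹ * q2.2)⁻¹? reorganize:
    -- From hb1 : q1.1.1 = q1.2 * p1.1 * q1.2⁻¹, so p1.1 = q1.2⁻¹ * q1.1.1 * q1.2.
    -- Similarly p2.1 = q2.2⁻¹ * q2.1.1 * q2.2. With hq, set h := q2.2⁻¹ * q1.2? We need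
    -- p2.1 = g * p1.1 * g⁻¹ and p1.2 = p2.2 ∘ g with g := q2.2⁻¹ * q1.2.
    have hg : p2.1 = (q2.2⁻¹ * q1.2) * p1.1 * (q2.2⁻¹ * q1.2)⁻¹ := by
      have e1 : p1.1 = q1.2⁻¹ * q1.1.1 * q1.2 := by
        rw [hb1]; group
      have e2 : p2.1 = q2.2⁻¹ * q2.1.1 * q2.2 := by
        rw [hb2]; group
      rw [e1, e2, ← hq]
      group
    have hw : p1.2 = p2.2 ∘ ⇑(q2.2⁻¹ * q1.2) := by
      funext z
      apply ρ.injective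
      have c1 := congrFun hc1 z
      have c2 := congrFun hc2 ((q2.2⁻¹) (q1.2 z))
      simp only [Function.comp_apply, Equiv.Perm.mul_apply] at c1 c2 ⊢
      rw [c1, c2, Equiv.Perm.inv_def, Equiv.apply_symm_apply, hq]
    have := uniqueRep hp1.2.1 hp2.2.1 (q2.2⁻¹ * q1.2) hg hw
    exact Subtype.ext (Prod.ext this.1 this.2)
  have hFsurj : Function.Surjective F := by
    rintro ⟨p, hp⟩
    -- pull back with ρ.symm
    have hprim : ∀ x y : Fin n, p.1.SameCycle x y →
        Wrd p.1 (⇑ρ.symm ∘ p.2) x = Wrd p.1 (⇑ρ.symm ∘ p.2) y → x = y :=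
      prim_comp ρ.symm.injective (prim_of_InA hp.2.1)
    obtain ⟨q, hqa, hqb, hqc⟩ := existsRep p.1 (⇑ρ.symm ∘ p.2) hprim
    have hM : Multiset.map q.1.2 Finset.univ.val = M := by
      have h1 : Multiset.map q.1.2 Finset.univ.val
          = Multiset.map (q.1.2 ∘ ⇑q.2) Finset.univ.val := by
        conv_lhs => rw [← perm_univ_map q.2]
        rw [Multiset.map_map]
      rw [h1, ← hqc, ← Multiset.map_map, hp.2.2, Multiset.map_map]
      have : ⇑ρ.symm ∘ ⇑ρ = id := by funext z; simp
      rw [this, Multiset.map_id]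
    have hT : fullCycleType q.1.1 = lam := by
      rw [hqb, fullCycleType_conj]; exact hp.1
    refine ⟨⟨q.1, hT, hqa, hM⟩, ?_⟩
    -- now show F of this equals p
    apply Subtype.ext
    -- F applied gives canonical rep of (q.1.1, ρ ∘ q.1.2); show it equals p
    obtain ⟨ha, hb, hc⟩ := Classical.choose_spec (canonSpec q.1.1 q.1.2 hqa)
    set q' := Classical.choose (canonSpec q.1.1 q.1.2 hqa)
    -- p is also an InA pair conjugate to (q.1.1, ρ ∘ q.1.2):
    -- q.1.1 = q.2 * p.1 * q.2⁻¹, and ρ ∘ q.1.2 = p.2 ∘ q.2⁻¹.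
    -- chain: q'.1.1 = q'.2 * q.1.1 * q'.2⁻¹ = (q'.2 * q.2) * p.1 * (q'.2 * q.2)⁻¹
    -- and words match with g := q'.2 * q.2.
    have hg : q'.1.1 = (q'.2 * q.2) * p.1 * (q'.2 * q.2)⁻¹ := by
      rw [hb, hqb]; group
    have hw : p.2 = q'.1.2 ∘ ⇑(q'.2 * q.2) := by
      funext z
      have c1 := congrFun hc (q.2 z)
      simp only [Function.comp_apply] at c1
      have c2 := congrFun hqc z
      simp only [Function.comp_apply] at c2
      simp only [Function.comp_apply, Equiv.Perm.mul_apply]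
      rw [← c1, ← c2]
      simp
    -- uniqueRep applied to (p.1, p.2) and (q'.1.1, q'.1.2):
    have := uniqueRep hp.2.1 ha (q'.2 * q.2) hg hw
    exact (Prod.ext this.1 this.2).symm
  exact Nat.card_congr (Equiv.ofBijective F ⟨hFinj, hFsurj⟩)

/- ### the canonical word of a descent set -/

def wFin (n : ℕ) (I : Finset ℕ) : Fin n → ℕ :=
  fun i => 1 + (I.filter (· < i.val)).card

lemma wFin_mono {I : Finset ℕ} : Monotone (wFin n I) := by
  intro i j hij
  apply Nat.add_le_add_left
  apply Finset.card_le_card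
  intro a ha
  simp only [Finset.mem_filter] at ha ⊢
  exact ⟨ha.1, lt_of_lt_of_le ha.2 hij⟩

lemma wFin_strict_iff {I : Finset ℕ} (i : ℕ) (h : i + 1 < n) :
    wFin n I ⟨i, Nat.lt_of_succ_lt h⟩ < wFin n I ⟨i + 1, h⟩ ↔ i ∈ I := by
  unfold wFin
  simp only [Nat.add_lt_add_iff_left]
  constructor
  · intro hc
    by_contra hni
    have : I.filter (· < i) = I.filter (· < i + 1) := by
      apply Finset.filter_congr
      intro a ha
      constructor
      · omega
      · intro h1
        rcases Nat.lt_succ_iff_lt_or_eq.mp h1 with h2 | rfl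
        · exact h2
        · exact absurd ha hni
    rw [this] at hc
    exact lt_irrefl _ hc
  · intro hi
    apply Finset.card_lt_card
    constructor
    · intro a ha
      simp only [Finset.mem_filter] at ha ⊢
      exact ⟨ha.1, by omega⟩
    · intro hsub
      have : i ∈ I.filter (· < i + 1) := Finset.mem_filter.mpr ⟨hi, by omega⟩
      have := hsub this
      simp only [Finset.mem_filter] at this
      omega

lemma desc_iff {I : Finset ℕ} (σ : Equiv.Perm (Fin n)) :
    descSet σ ⊆ I ↔ InA σ (wFin n I) := by
  constructor
  · intro hsub
    refine ⟨wFin_mono, ?_⟩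
    intro i h hdesc
    have hmem : i ∈ descSet σ := by
      unfold descSet descSeq
      simp only [Finset.mem_filter, Finset.mem_range]
      exact ⟨by omega, h, hdesc⟩
    exact (wFin_strict_iff i h).mpr (hsub hmem)
  · intro hA x hx
    unfold descSet descSeq at hx
    simp only [Finset.mem_filter, Finset.mem_range] at hx
    obtain ⟨-, h, hdesc⟩ := hx
    exact (wFin_strict_iff x h).mp (hA.2 x h hdesc)

theorem card_count_eq_pairs (I : Finset ℕ) (lam : Multiset ℕ) :
    Nat.card {π : Equiv.Perm (Fin n) // fullCycleType π = lam ∧ descSet π ⊆ I} =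
      Nat.card {p : Equiv.Perm (Fin n) × (Fin n → ℕ) //
        GoodPair n lam (Multiset.map (wFin n I) Finset.univ.val) p} := by
  apply Nat.card_congr
  refine ⟨fun ⟨π, hπ⟩ => ⟨(π, wFin n I), hπ.1, (desc_iff π).mp hπ.2, rfl⟩,
    fun ⟨p, hp⟩ => ⟨p.1, hp.1, ?_⟩, fun _ => rfl, ?_⟩
  · -- descSet p.1 ⊆ I from InA p.1 p.2 and letters
    have : p.2 = wFin n I := mono_eq_of_map_eq hp.2.1.1 wFin_mono hp.2.2
    exact (desc_iff p.1).mpr (this ▸ hp.2.1)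
  · rintro ⟨p, hp⟩
    have : p.2 = wFin n I := mono_eq_of_map_eq hp.2.1.1 wFin_mono hp.2.2
    apply Subtype.ext
    simp only
    exact Prod.ext rfl this.symm

/- ### parts of a composition -/

def partsAux (b : ℕ) : ℕ → List ℕ → List ℕ
  | a, [] => [b - a]
  | a, j :: s => (j + 1 - a) :: partsAux b (j + 1) s

lemma zip_parts (b : ℕ) : ∀ (s : List ℕ) (a : ℕ),
    List.zipWith (· - ·) (s.map (· + 1) ++ [b]) (a :: s.map (· + 1)) = partsAux b a s := by
  intro s
  induction s with
  | nil => intro a; simp [partsAux]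
  | cons j s ih =>
    intro a
    simp only [List.map_cons, List.cons_append, List.zipWith_cons_cons, partsAux]
    rw [ih (j + 1)]

lemma compParts_eq_parts (I : Finset ℕ) :
    compParts n I = ↑(partsAux n 0 (I.sort (· ≤ ·))) := by
  unfold compParts
  rw [zip_parts]

lemma val_add_of_union {α : Type*} [DecidableEq α] (s t : Finset α) (h : Disjoint s t) :
    (s ∪ t).val = s.val + t.val := by
  rw [← Finset.disjUnion_eq_union s t h]; rfl

lemma G_eq (b : ℕ) : ∀ (s : List ℕ), List.Pairwise (· < ·) s → ∀ (a ℓ : ℕ),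
    (∀ j ∈ s, a ≤ j ∧ j + 1 ≤ b) →
    Multiset.map (fun i => ℓ + s.countP (fun j => decide (j < i))) (Finset.Ico a b).val
      = ∑ t : Fin (partsAux b a s).length,
          Multiset.replicate ((partsAux b a s).get t) (ℓ + t.val) := by
  intro s
  induction s with
  | nil =>
    intro _ a ℓ _
    simp only [partsAux, List.countP_nil]
    rw [show (fun i => ℓ + 0) = Function.const ℕ ℓ by funext i; simp [Function.const]]
    rw [Multiset.map_const]
    simp [Multiset.replicate]
    exact (one_nsmul _).symm
  | cons j s ih =>
    intro hsort a ℓ hb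
    have hj := hb j List.mem_cons_self
    have hsplit : (Finset.Ico a b).val = (Finset.Ico a (j+1)).val + (Finset.Ico (j+1) b).val := by
      rw [← val_add_of_union _ _ (Finset.Ico_disjoint_Ico_consecutive a (j+1) b),
        Finset.Ico_union_Ico_eq_Ico (by omega) (by omega)]
    rw [hsplit, Multiset.map_add]
    have htail : ∀ x ∈ s, j < x := (List.pairwise_cons.mp hsort).1
    have h1 : Multiset.map (fun i => ℓ + (j :: s).countP (fun j' => decide (j' < i)))
        (Finset.Ico a (j+1)).val = Multiset.replicate (j + 1 - a) ℓ := by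
      have : ∀ i ∈ (Finset.Ico a (j+1)).val,
          ℓ + (j :: s).countP (fun j' => decide (j' < i)) = ℓ := by
        intro i hi
        rw [Finset.mem_val, Finset.mem_Ico] at hi
        have hz : (j :: s).countP (fun j' => decide (j' < i)) = 0 := by
          apply List.countP_eq_zero.mpr
          intro j' hj'
          rcases List.mem_cons.mp hj' with rfl | hmem
          · simp; omega
          · have := htail j' hmem; simp; omega
        omega
      rw [Multiset.map_congr rfl this]
      rw [show (fun (_ : ℕ) => ℓ) = Function.const ℕ ℓ by rfl, Multiset.map_const]
      congr 1
      have : Multiset.card (Finset.Ico a (j+1)).val = (Finset.Ico a (j+1)).card := rfl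
      rw [this, Nat.card_Ico]
    have h2 : Multiset.map (fun i => ℓ + (j :: s).countP (fun j' => decide (j' < i)))
        (Finset.Ico (j+1) b).val
        = ∑ t : Fin (partsAux b (j+1) s).length,
            Multiset.replicate ((partsAux b (j+1) s).get t) ((ℓ + 1) + t.val) := by
      have hc : ∀ i ∈ (Finset.Ico (j+1) b).val,
          ℓ + (j :: s).countP (fun j' => decide (j' < i))
            = (ℓ + 1) + s.countP (fun j' => decide (j' < i)) := by
        intro i hi
        rw [Finset.mem_val, Finset.mem_Ico] at hi
        rw [List.countP_cons]
        have : decide (j < i) = true := by simp; omega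
        rw [this]
        simp
        omega
      rw [Multiset.map_congr rfl hc]
      exact ih (List.pairwise_cons.mp hsort).2 (j+1) (ℓ+1)
        (fun x hx => ⟨htail x hx, (hb x (List.mem_cons_of_mem j hx)).2⟩)
    rw [h1, h2]
    show _ = ∑ t : Fin ((partsAux b (j+1) s).length + 1),
        Multiset.replicate (((j + 1 - a) :: partsAux b (j+1) s).get t) (ℓ + t.val)
    rw [Fin.sum_univ_succ]
    congr 1
    apply Finset.sum_congr rfl
    intro t _
    have harith : ℓ + 1 + (t : ℕ) = ℓ + ((t : ℕ) + 1) := by omega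
    simp only [List.get_cons_succ, Fin.val_succ, harith]
    rfl

lemma letters_eq (I : Finset ℕ) (hI : I ⊆ Finset.range (n - 1)) :
    Multiset.map (wFin n I) Finset.univ.val
      = ∑ t : Fin (partsAux n 0 (I.sort (· ≤ ·))).length,
          Multiset.replicate ((partsAux n 0 (I.sort (· ≤ ·))).get t) (1 + t.val) := by
  set s := I.sort (· ≤ ·) with hs
  have hcard : ∀ i : ℕ, (I.filter (· < i)).card = s.countP (fun j => decide (j < i)) := by
    intro i
    have h1 : (I.filter (· < i)).card = Multiset.countP (· < i) I.val := by
      rw [Finset.card_def, Finset.filter_val, Multiset.countP_eq_card_filter]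
    rw [h1, ← Finset.sort_eq (r := (· ≤ ·)) (s := I), ← hs, Multiset.coe_countP]
  have hw : ∀ x : Fin n, wFin n I x = 1 + s.countP (fun j => decide (j < x.val)) := by
    intro x
    unfold wFin
    rw [hcard]
  have hmap : Multiset.map (wFin n I) Finset.univ.val
      = Multiset.map (fun i => 1 + s.countP (fun j => decide (j < i)))
          (Finset.Ico 0 n).val := by
    have h2 : Multiset.map Fin.val (Finset.univ.val : Multiset (Fin n)) = (Finset.Ico 0 n).val := by
      have h3 := congrArg Finset.val (Fin.map_valEmbedding_univ (n := n))
      rw [Finset.map_val] at h3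
      rw [← Finset.range_eq_Ico, ← Nat.Iio_eq_range]
      exact h3
    rw [← h2, Multiset.map_map]
    apply Multiset.map_congr rfl
    intro x _
    exact hw x
  rw [hmap]
  apply G_eq
  · exact ((Finset.pairwise_sort I (· ≤ ·)).and (Finset.sort_nodup (r := (· ≤ ·)) (s := I))).imp fun h => lt_of_le_of_ne h.1 h.2
  · intro j hj
    have : j ∈ I := (Finset.mem_sort (· ≤ ·)).mp hj
    have := Finset.mem_range.mp (hI this)
    omega

/- ### permutations of lists give index bijections -/

lemma perm_get {α : Type*} {l₁ l₂ : List α} (h : List.Perm l₁ l₂) :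
    ∃ e : Fin l₁.length ≃ Fin l₂.length, ∀ t, l₂.get (e t) = l₁.get t := by
  induction h with
  | nil => exact ⟨Equiv.refl _, fun t => t.elim0⟩
  | @cons x t₁ t₂ h ih =>
    obtain ⟨e, he⟩ := ih
    refine ⟨(finSuccEquiv t₁.length).trans ((Equiv.optionCongr e).trans
      (finSuccEquiv t₂.length).symm), ?_⟩
    intro t
    refine Fin.cases ?_ ?_ t
    · simp
    · intro i
      have := he i
      simp only [List.get_eq_getElem] at this
      simp [this]
  | swap x y l =>
    refine ⟨Equiv.swap ⟨0, Nat.succ_pos _⟩ ⟨1, Nat.succ_lt_succ (Nat.succ_pos _)⟩, ?_⟩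
    rintro ⟨(_ | (_ | k)), hk⟩
    all_goals simp [Equiv.swap_apply_def, Fin.ext_iff]
  | trans h₁ h₂ ih₁ ih₂ =>
    obtain ⟨e₁, he₁⟩ := ih₁
    obtain ⟨e₂, he₂⟩ := ih₂
    refine ⟨e₁.trans e₂, fun t => ?_⟩
    have ha := he₂ (e₁ t)
    have hb := he₁ t
    simp only [List.get_eq_getElem] at ha hb
    simp [ha, hb]

/- ### constructing the relabeling bijection -/

lemma exists_rho {I J : Finset ℕ} (hI : I ⊆ Finset.range (n - 1))
    (hJ : J ⊆ Finset.range (n - 1)) (h : compParts n I = compParts n J) :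
    ∃ ρ : ℕ ≃ ℕ,
      (Multiset.map (wFin n I) Finset.univ.val).map ⇑ρ
        = Multiset.map (wFin n J) Finset.univ.val := by
  classical
  set LI := partsAux n 0 (I.sort (· ≤ ·)) with hLI
  set LJ := partsAux n 0 (J.sort (· ≤ ·)) with hLJ
  have hperm : List.Perm LI LJ := by
    apply Multiset.coe_eq_coe.mp
    rw [← compParts_eq_parts, ← compParts_eq_parts, h]
  have hlen : LI.length = LJ.length := hperm.length_eq
  obtain ⟨e, he⟩ := perm_get hperm
  set p : ℕ → Prop := fun x => x - 1 < LI.length ∧ 1 ≤ x with hp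
  have hdec : DecidablePred p := fun x => instDecidableAnd
  set fI : Fin LI.length ≃ Subtype p :=
    { toFun := fun t => ⟨t.val + 1, by simp [hp]⟩
      invFun := fun x => ⟨x.val - 1, x.2.1⟩
      left_inv := fun t => by simp
      right_inv := fun x => by
        apply Subtype.ext
        have := x.2.2
        simp
        omega } with hfI
  set e₀ : Equiv.Perm (Fin LI.length) := e.trans (finCongr hlen.symm) with he₀
  set ρ : ℕ ≃ ℕ := e₀.extendDomain fI with hρ
  have hkey : ∀ t : Fin LI.length, ρ (t.val + 1) = (e₀ t).val + 1 := by
    intro t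
    have hpt : p (t.val + 1) := by simp [hp]
    have h1 : ρ (t.val + 1) = ((fI (e₀ (fI.symm ⟨t.val + 1, hpt⟩))) : ℕ) :=
      Equiv.Perm.extendDomain_apply_subtype e₀ fI hpt
    have h2 : fI.symm ⟨t.val + 1, hpt⟩ = t := by
      simp [hfI]
    rw [h1, h2]
    rfl
  refine ⟨ρ, ?_⟩
  rw [letters_eq I hI, letters_eq J hJ, ← hLI, ← hLJ]
  have hmapsum : (∑ t : Fin LI.length, Multiset.replicate (LI.get t) (1 + t.val)).map ⇑ρ
      = ∑ t : Fin LI.length, (Multiset.replicate (LI.get t) (1 + t.val)).map ⇑ρ := by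
    exact map_sum (Multiset.mapAddMonoidHom ⇑ρ) _ _
  rw [hmapsum]
  have hterm : ∀ t : Fin LI.length,
      (Multiset.replicate (LI.get t) (1 + t.val)).map ⇑ρ
        = Multiset.replicate (LJ.get (e t)) (1 + (e t).val) := by
    intro t
    rw [Multiset.map_replicate]
    congr 1
    · exact (he t).symm
    · rw [show 1 + t.val = t.val + 1 by omega, hkey t]
      have : (e₀ t).val = (e t).val := rfl
      rw [this]
      omega
  rw [Finset.sum_congr rfl (fun t _ => hterm t)]
  have := Equiv.sum_comp e (fun u : Fin LJ.length =>
    Multiset.replicate (LJ.get u) (1 + u.val))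
  exact this

end GR

theorem stmt10 (n : ℕ) (I J : Finset ℕ)
    (hI : I ⊆ Finset.range (n - 1)) (hJ : J ⊆ Finset.range (n - 1))
    (h : compParts n I = compParts n J)
    (lam : Multiset ℕ) (hlam : lam.sum = n) :
    Nat.card {π : Equiv.Perm (Fin n) // fullCycleType π = lam ∧ descSet π ⊆ I}
      = Nat.card {π : Equiv.Perm (Fin n) // fullCycleType π = lam ∧ descSet π ⊆ J} := by
  obtain ⟨ρ, hρ⟩ := GR.exists_rho hI hJ h
  rw [GR.card_count_eq_pairs I lam, GR.card_count_eq_pairs J lam,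
    GR.card_goodPair_map lam _ ρ, hρ]
end

section
/- The map sending τ ∈ U_n (with underlying n-cycle π whose entry π(k) was replaced by n+1) to the (n+1)-cycle π' = (t₁, t₂, ..., t_{n−1}, k, n+1), where π is written in cycle form as (t₁,...,t_{n−1},k) ending in k, is a bijection from U_n to the set of single (n+1)-cycles on {1,...,n+1}, and it satisfies D(τ) = D(π') ∩ {1,...,n−1}. -/
section Helpers

variable {n : ℕ}

lemma extPerm_castSucc (π : Equiv.Perm (Fin n)) (j : Fin n) :
    extPerm π (Fin.castSucc j) = Fin.castSucc (π j) := by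
  simp [extPerm, Equiv.permCongr_apply]

lemma extPerm_last (π : Equiv.Perm (Fin n)) :
    extPerm π (Fin.last n) = Fin.last n := by
  simp [extPerm, Equiv.permCongr_apply]

lemma extCycle_castSucc (π : Equiv.Perm (Fin n)) (k j : Fin n) :
    extCycle π k (Fin.castSucc j) =
      if j = k then Fin.last n else Fin.castSucc (π j) := by
  rcases eq_or_ne j k with rfl | h
  · simp [extCycle, Equiv.Perm.mul_apply, Equiv.swap_apply_left, extPerm_last]
  · rw [extCycle, Equiv.Perm.mul_apply,
      Equiv.swap_apply_of_ne_of_ne (by simpa [Fin.castSucc_inj] using h)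
        (Fin.castSucc_lt_last j).ne, extPerm_castSucc]
    simp [h]

lemma extCycle_last (π : Equiv.Perm (Fin n)) (k : Fin n) :
    extCycle π k (Fin.last n) = Fin.castSucc (π k) := by
  rw [extCycle, Equiv.Perm.mul_apply, Equiv.swap_apply_right, extPerm_castSucc]

lemma update_val (π : Equiv.Perm (Fin n)) (k j : Fin n) :
    (Function.update (fun i => ((π i : ℕ) + 1)) k (n + 1)) j
      = (extCycle π k (Fin.castSucc j) : ℕ) + 1 := by
  rcases eq_or_ne j k with rfl | h
  · simp [extCycle_castSucc]
  · rw [Function.update_of_ne h, extCycle_castSucc]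
    simp [h]

lemma reach_symm {m : ℕ} (σ : Equiv.Perm (Fin m)) {x y : Fin m}
    (h : ∃ t : ℕ, (σ ^ t) x = y) : ∃ t : ℕ, (σ ^ t) y = x := by
  obtain ⟨t, ht⟩ := h
  refine ⟨t * (orderOf σ - 1), ?_⟩
  have ho : 1 ≤ orderOf σ := orderOf_pos σ
  have hexp : t * (orderOf σ - 1) + t = t * orderOf σ := by
    cases' Nat.exists_eq_add_of_le ho with c hc
    rw [hc, Nat.add_comm 1 c, Nat.add_sub_cancel]
    ring
  have : (σ ^ (t * (orderOf σ - 1))) ((σ ^ t) x) = (σ ^ (t * orderOf σ)) x := by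
    rw [← Equiv.Perm.mul_apply, ← pow_add, hexp]
  rw [ht] at this
  rw [this, pow_mul', pow_orderOf_eq_one, one_pow, Equiv.Perm.one_apply]

lemma isCyclic'_extCycle (π : Equiv.Perm (Fin n)) (k : Fin n)
    (hπ : IsCyclic' π) : IsCyclic' (extCycle π k) := by
  set σ := extCycle π k with hσ
  have claim : ∀ m : ℕ, ∀ j : Fin n, (π ^ m) j = k →
      ∃ t : ℕ, (σ ^ t) (Fin.castSucc j) = Fin.last n := by
    intro m
    induction m with
    | zero =>
      intro j hj
      simp only [pow_zero, Equiv.Perm.one_apply] at hj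
      exact ⟨1, by simp [hσ, extCycle_castSucc, hj]⟩
    | succ m ih =>
      intro j hj
      rcases eq_or_ne j k with rfl | h
      · exact ⟨1, by simp [hσ, extCycle_castSucc]⟩
      · have hj' : (π ^ m) (π j) = k := by
          rw [pow_succ, Equiv.Perm.mul_apply] at hj; exact hj
        obtain ⟨t, ht⟩ := ih (π j) hj'
        refine ⟨t + 1, ?_⟩
        rw [pow_succ, Equiv.Perm.mul_apply]
        rw [hσ, extCycle_castSucc]
        rw [if_neg h]; exact ht
  have reach_last : ∀ x : Fin (n + 1), ∃ t : ℕ, (σ ^ t) x = Fin.last n := by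
    intro x
    induction x using Fin.lastCases with
    | last => exact ⟨0, rfl⟩
    | cast j =>
      obtain ⟨m, hm⟩ := hπ j k
      exact claim m j hm
  intro x y
  obtain ⟨t₁, h₁⟩ := reach_last x
  obtain ⟨t₂, h₂⟩ := reach_symm σ (reach_last y)
  refine ⟨t₂ + t₁, ?_⟩
  rw [pow_add, Equiv.Perm.mul_apply, h₁, h₂]

lemma isCyclic'_of_extCycle (π : Equiv.Perm (Fin n)) (k : Fin n)
    (h : IsCyclic' (extCycle π k)) : IsCyclic' π := by
  set σ := extCycle π k with hσ
  set g : Fin (n + 1) → Fin n := fun x =>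
    if h : x = Fin.last n then k else x.castPred h with hg
  have hgc : ∀ j : Fin n, g (Fin.castSucc j) = j := by
    intro j
    simp [hg, (Fin.castSucc_lt_last j).ne]
  have hgl : g (Fin.last n) = k := by simp [hg]
  have step : ∀ x : Fin (n + 1), g (σ x) = g x ∨ g (σ x) = π (g x) := by
    intro x
    induction x using Fin.lastCases with
    | last =>
      right
      rw [hσ, extCycle_last, hgc, hgl]
    | cast j =>
      rcases eq_or_ne j k with rfl | h'
      · left
        rw [hσ, extCycle_castSucc]
        simp [hgl, hgc]
      · right
        rw [hσ, extCycle_castSucc]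
        simp [h', hgc]
  have claim : ∀ m : ℕ, ∀ x : Fin (n + 1), ∀ y : Fin n,
      (σ ^ m) x = Fin.castSucc y → ∃ t : ℕ, (π ^ t) (g x) = y := by
    intro m
    induction m with
    | zero =>
      intro x y hxy
      simp only [pow_zero, Equiv.Perm.one_apply] at hxy
      exact ⟨0, by simp [hxy, hgc]⟩
    | succ m ih =>
      intro x y hxy
      rw [pow_succ, Equiv.Perm.mul_apply] at hxy
      obtain ⟨t, ht⟩ := ih (σ x) y hxy
      rcases step x with hs | hs
      · exact ⟨t, by rwa [hs] at ht⟩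
      · exact ⟨t + 1, by rw [pow_succ, Equiv.Perm.mul_apply, ← hs]; exact ht⟩
  intro x y
  obtain ⟨m, hm⟩ := h (Fin.castSucc x) (Fin.castSucc y)
  obtain ⟨t, ht⟩ := claim m (Fin.castSucc x) y hm
  exact ⟨t, by rwa [hgc] at ht⟩

lemma extCycle_inj {π π' : Equiv.Perm (Fin n)} {k k' : Fin n}
    (h : extCycle π k = extCycle π' k') : π = π' ∧ k = k' := by
  have hk : k = k' := by
    have h1 := congrArg (fun σ : Equiv.Perm (Fin (n + 1)) => σ (Fin.castSucc k)) h
    simp only [extCycle_castSucc, if_pos rfl] at h1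
    by_contra hne
    rw [if_neg hne] at h1
    exact (Fin.castSucc_lt_last (π' k)).ne h1.symm
  subst hk
  refine ⟨?_, rfl⟩
  apply Equiv.ext
  intro j
  rcases eq_or_ne j k with rfl | hj
  · have h1 := congrArg (fun σ : Equiv.Perm (Fin (n + 1)) => σ (Fin.last n)) h
    simp only [extCycle_last] at h1
    exact Fin.castSucc_injective n h1
  · have h1 := congrArg (fun σ : Equiv.Perm (Fin (n + 1)) => σ (Fin.castSucc j)) h
    simp only [extCycle_castSucc, if_neg hj] at h1
    exact Fin.castSucc_injective n h1

lemma update_inj {π π' : Equiv.Perm (Fin n)} {k k' : Fin n}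
    (h : Function.update (fun i => ((π i : ℕ) + 1)) k (n + 1)
       = Function.update (fun i => ((π' i : ℕ) + 1)) k' (n + 1)) :
    π = π' ∧ k = k' := by
  have hk : k = k' := by
    by_contra hne
    have h1 := congrFun h k
    rw [Function.update_self, Function.update_of_ne hne] at h1
    have := (π' k).isLt
    omega
  subst hk
  refine ⟨?_, rfl⟩
  have hoff : ∀ i ≠ k, π i = π' i := by
    intro i hi
    have h1 := congrFun h i
    rw [Function.update_of_ne hi, Function.update_of_ne hi] at h1
    exact Fin.val_injective (by omega)
  apply Equiv.ext
  intro i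
  rcases eq_or_ne i k with rfl | hi
  · obtain ⟨j, hj⟩ := π'.surjective (π i)
    rcases eq_or_ne j i with rfl | hji
    · exact hj.symm
    · exfalso
      rw [← hoff j hji] at hj
      exact hji (π.injective hj)
  · exact hoff i hi

lemma desc_lemma (π : Equiv.Perm (Fin n)) (k : Fin n) :
    descSeq (Function.update (fun i => ((π i : ℕ) + 1)) k (n + 1))
      = descSet (extCycle π k) ∩ Finset.range (n - 1) := by
  ext i
  simp only [descSeq, descSet, Finset.mem_inter, Finset.mem_filter, Finset.mem_range]
  constructor
  · rintro ⟨hi, h1, h2⟩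
    have hi1 : i + 1 < n + 1 := Nat.lt_succ_of_lt h1
    refine ⟨⟨by omega, hi1, ?_⟩, hi⟩
    rw [update_val, update_val] at h2
    have e1 : (⟨i + 1, hi1⟩ : Fin (n + 1)) = Fin.castSucc ⟨i + 1, h1⟩ := rfl
    have e2 : (⟨i, Nat.lt_of_succ_lt hi1⟩ : Fin (n + 1))
        = Fin.castSucc ⟨i, Nat.lt_of_succ_lt h1⟩ := rfl
    rw [e1, e2]
    omega
  · rintro ⟨⟨_, h1, h2⟩, hi⟩
    have hn1 : i + 1 < n := by omega
    refine ⟨hi, hn1, ?_⟩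
    rw [update_val, update_val]
    have e1 : (⟨i + 1, h1⟩ : Fin (n + 1)) = Fin.castSucc ⟨i + 1, hn1⟩ := rfl
    have e2 : (⟨i, Nat.lt_of_succ_lt h1⟩ : Fin (n + 1))
        = Fin.castSucc ⟨i, Nat.lt_of_succ_lt hn1⟩ := rfl
    rw [e1, e2] at h2
    omega

lemma extCycle_surj (hn : 1 ≤ n) (σ : Equiv.Perm (Fin (n + 1)))
    (hσ : IsCyclic' σ) :
    ∃ (π : Equiv.Perm (Fin n)) (k : Fin n), IsCyclic' π ∧ extCycle π k = σ := by
  have hlast : σ⁻¹ (Fin.last n) ≠ Fin.last n := by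
    intro h
    have hfix : σ (Fin.last n) = Fin.last n := by
      conv_lhs => rw [← h]
      exact Equiv.apply_symm_apply σ _
    obtain ⟨t, ht⟩ := hσ (Fin.last n) (Fin.castSucc ⟨0, hn⟩)
    rw [Equiv.Perm.pow_apply_eq_self_of_apply_eq_self hfix] at ht
    exact (Fin.castSucc_lt_last _).ne ht.symm
  set k : Fin n := (σ⁻¹ (Fin.last n)).castPred hlast with hk
  have hck : Fin.castSucc k = σ⁻¹ (Fin.last n) := Fin.castSucc_castPred _ _
  set σ' : Equiv.Perm (Fin (n + 1)) := σ * Equiv.swap (Fin.castSucc k) (Fin.last n)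
    with hσ'
  have hσ'last : σ' (Fin.last n) = Fin.last n := by
    rw [hσ', Equiv.Perm.mul_apply, Equiv.swap_apply_right, hck]
    exact Equiv.apply_symm_apply σ _
  set e : Equiv.Perm (Option (Fin n)) := finSuccEquivLast.permCongr σ' with he
  have he_none : e none = none := by
    simp [he, Equiv.permCongr_apply, hσ'last]
  have he_some : ∀ j : Fin n, e (some j) = some ((e.removeNone) j) := by
    intro j
    rcases h : e (some j) with _ | a
    · exfalso
      have := e.injective (h.trans he_none.symm)
      simp at this
    · rw [← h]
      exact (Equiv.removeNone_some e ⟨a, h⟩).symm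
  set π : Equiv.Perm (Fin n) := e.removeNone with hπ
  have hext : extPerm π = σ' := by
    apply Equiv.ext
    intro x
    induction x using Fin.lastCases with
    | last => rw [extPerm_last, hσ'last]
    | cast j =>
      rw [extPerm_castSucc]
      have h1 : e (some j) = some (π j) := he_some j
      rw [he, Equiv.permCongr_apply] at h1
      simp only [Equiv.symm_symm, finSuccEquivLast_symm_some] at h1
      have h2 := congrArg finSuccEquivLast.symm h1
      rw [Equiv.symm_apply_apply, finSuccEquivLast_symm_some] at h2
      exact h2.symm
  have hec : extCycle π k = σ := by
    rw [extCycle, hext, hσ', mul_assoc, Equiv.swap_mul_self, mul_one]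
  exact ⟨π, k, isCyclic'_of_extCycle π k (hec ▸ hσ), hec⟩

end Helpers

theorem stmt19 (n : ℕ) (hn : 1 ≤ n) :
    ∃ Φ : {τ : Fin n → ℕ // InU n τ} ≃
        {π : Equiv.Perm (Fin (n + 1)) // IsCyclic' π},
      ∀ (π : Equiv.Perm (Fin n)) (k : Fin n) (h : IsCyclic' π),
        (Φ ⟨Function.update (fun i => ((π i : ℕ) + 1)) k (n + 1),
            ⟨π, k, h, rfl⟩⟩).1 = extCycle π k ∧
        descSeq (Function.update (fun i => ((π i : ℕ) + 1)) k (n + 1))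
          = descSet (extCycle π k) ∩ Finset.range (n - 1) := by
  classical
  set F : {τ : Fin n → ℕ // InU n τ} → {π : Equiv.Perm (Fin (n + 1)) // IsCyclic' π} :=
    fun x => ⟨extCycle x.2.choose x.2.choose_spec.choose,
      isCyclic'_extCycle _ _ x.2.choose_spec.choose_spec.1⟩ with hF
  have Fspec : ∀ (π : Equiv.Perm (Fin n)) (k : Fin n) (h : IsCyclic' π),
      (F ⟨Function.update (fun i => ((π i : ℕ) + 1)) k (n + 1), ⟨π, k, h, rfl⟩⟩).1
        = extCycle π k := by
    intro π k h
    set x : {τ : Fin n → ℕ // InU n τ} :=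
      ⟨Function.update (fun i => ((π i : ℕ) + 1)) k (n + 1), ⟨π, k, h, rfl⟩⟩ with hx
    have hspec := x.2.choose_spec.choose_spec.2
    have := update_inj (hspec.symm.trans (show x.1 = _ from rfl))
    simp only [hF]
    rw [this.2, this.1]
  have hFbij : Function.Bijective F := by
    constructor
    · rintro ⟨τ, hτ⟩ ⟨τ', hτ'⟩ hFeq
      have h1 : extCycle hτ.choose hτ.choose_spec.choose
          = extCycle hτ'.choose hτ'.choose_spec.choose := by
        simpa [hF, Subtype.ext_iff] using hFeq
      obtain ⟨hπ, hk⟩ := extCycle_inj h1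
      have e1 := hτ.choose_spec.choose_spec.2
      have e2 := hτ'.choose_spec.choose_spec.2
      apply Subtype.ext
      show τ = τ'
      rw [e1, e2, hk, hπ]
    · rintro ⟨σ, hσ⟩
      obtain ⟨π, k, hπ, hec⟩ := extCycle_surj hn σ hσ
      refine ⟨⟨Function.update (fun i => ((π i : ℕ) + 1)) k (n + 1), ⟨π, k, hπ, rfl⟩⟩, ?_⟩
      apply Subtype.ext
      rw [Fspec π k hπ, hec]
  refine ⟨Equiv.ofBijective F hFbij, ?_⟩
  intro π k h
  exact ⟨Fspec π k h, desc_lemma π k⟩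
end
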